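/- Let f : ℝ → ℝ be given by f(x) = √(1 + cosh⁴(x)) and let φ(x) = 1/cosh²(x). Then for every x ∈ ℝ one has φ''(x) + (f'(x)/f(x))·φ'(x) = −2·((cosh²x − 1)² + 2) / (cosh⁴x·(1 + cosh⁴x)), which is strictly negative; moreover φ is positive, bounded, and non-constant. -/

import Mathlib

open Real

noncomputable section

private lemma dphi (x : ℝ) :
    HasDerivAt (fun x => 1 / Real.cosh x ^ 2) (-2 * Real.sinh x / Real.cosh x ^ 3) x := by
  have hc := (Real.hasDerivAt_cosh x).pow 2
  have h := hc.inv (pow_ne_zero 2 (Real.cosh_pos x).ne')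
  have hco := (Real.cosh_pos x).ne'
  simp only [one_div]
  refine h.congr_deriv ?_
  simp only [Pi.pow_apply, Nat.cast_ofNat]
  field_simp
  ring

private lemma dphi2 (x : ℝ) :
    HasDerivAt (fun x => -2 * Real.sinh x / Real.cosh x ^ 3)
      (-2 * (Real.cosh x ^ 2 - 3 * Real.sinh x ^ 2) / Real.cosh x ^ 4) x := by
  have hn : HasDerivAt (fun x => -2 * Real.sinh x) (-2 * Real.cosh x) x :=
    (Real.hasDerivAt_sinh x).const_mul (-2)
  have hd := (Real.hasDerivAt_cosh x).pow 3
  have h := hn.div hd (pow_ne_zero 3 (Real.cosh_pos x).ne')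
  have hco := (Real.cosh_pos x).ne'
  refine h.congr_deriv ?_
  simp only [Pi.pow_apply, Nat.cast_ofNat]
  field_simp
  ring

private lemma df (x : ℝ) :
    HasDerivAt (fun x => Real.sqrt (1 + Real.cosh x ^ 4))
      (2 * Real.cosh x ^ 3 * Real.sinh x / Real.sqrt (1 + Real.cosh x ^ 4)) x := by
  have hc : HasDerivAt (fun x => 1 + Real.cosh x ^ 4) (4 * Real.cosh x ^ 3 * Real.sinh x) x := by
    have := ((Real.hasDerivAt_cosh x).pow 4).const_add 1
    refine this.congr_deriv ?_
    norm_num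
  have hpos : (0:ℝ) < 1 + Real.cosh x ^ 4 := by positivity
  have h := hc.sqrt hpos.ne'
  convert h using 1
  field_simp
  ring

theorem stmt13 (f φ : ℝ → ℝ)
    (hf : ∀ x, f x = Real.sqrt (1 + Real.cosh x ^ 4))
    (hφ : ∀ x, φ x = 1 / Real.cosh x ^ 2) :
    (∀ x : ℝ,
      deriv (deriv φ) x + (deriv f x / f x) * deriv φ x =
        -2 * ((Real.cosh x ^ 2 - 1) ^ 2 + 2) /
          (Real.cosh x ^ 4 * (1 + Real.cosh x ^ 4)) ∧
      deriv (deriv φ) x + (deriv f x / f x) * deriv φ x < 0) ∧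
    (∀ x : ℝ, 0 < φ x) ∧ (∃ M : ℝ, ∀ x : ℝ, φ x ≤ M) ∧ (∃ x y : ℝ, φ x ≠ φ y) := by
  have hφf : φ = fun x => 1 / Real.cosh x ^ 2 := funext hφ
  have hff : f = fun x => Real.sqrt (1 + Real.cosh x ^ 4) := funext hf
  have hdφ : deriv φ = fun x => -2 * Real.sinh x / Real.cosh x ^ 3 := by
    funext x; rw [hφf]; exact (dphi x).deriv
  have hdf : ∀ x, deriv f x = 2 * Real.cosh x ^ 3 * Real.sinh x / Real.sqrt (1 + Real.cosh x ^ 4) := by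
    intro x; rw [hff]; exact (df x).deriv
  have hdφ2 : ∀ x, deriv (deriv φ) x =
      -2 * (Real.cosh x ^ 2 - 3 * Real.sinh x ^ 2) / Real.cosh x ^ 4 := by
    intro x; rw [hdφ]; exact (dphi2 x).deriv
  refine ⟨fun x => ?_, fun x => by rw [hφ]; positivity, ⟨1, fun x => ?_⟩, 0, 1, ?_⟩
  · have hco := (Real.cosh_pos x).ne'
    have hpos : (0:ℝ) < 1 + Real.cosh x ^ 4 := by positivity
    have hsq : Real.sqrt (1 + Real.cosh x ^ 4) * Real.sqrt (1 + Real.cosh x ^ 4)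
        = 1 + Real.cosh x ^ 4 := Real.mul_self_sqrt hpos.le
    have hsqpos : (0:ℝ) < Real.sqrt (1 + Real.cosh x ^ 4) := Real.sqrt_pos.mpr hpos
    have hratio : deriv f x / f x =
        2 * Real.cosh x ^ 3 * Real.sinh x / (1 + Real.cosh x ^ 4) := by
      rw [hdf, hf, div_div, hsq]
    have key : deriv (deriv φ) x + (deriv f x / f x) * deriv φ x =
        -2 * ((Real.cosh x ^ 2 - 1) ^ 2 + 2) /
          (Real.cosh x ^ 4 * (1 + Real.cosh x ^ 4)) := by
      rw [hdφ2, hdφ, hratio]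
      field_simp
      ring_nf
      rw [Real.sinh_sq]
      ring
    refine ⟨key, ?_⟩
    rw [key]
    apply div_neg_of_neg_of_pos
    · nlinarith [sq_nonneg (Real.cosh x ^ 2 - 1)]
    · positivity
  · rw [hφ]
    rw [div_le_one (by positivity)]
    nlinarith [Real.one_le_cosh x]
  · rw [hφ 0, hφ 1]
    have h0 : Real.cosh 0 = 1 := Real.cosh_zero
    have h1 : 1 < Real.cosh 1 := Real.one_lt_cosh.mpr one_ne_zero
    rw [h0]
    intro h
    have hc1 : (0:ℝ) < Real.cosh 1 := Real.cosh_pos 1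
    rw [one_pow, div_one] at h
    field_simp at h
    nlinarith
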